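/- Let n ≥ 1, let a_1,…,a_n be integers, and let P be a natural number with P + a_j ≥ 0 for all 1 ≤ j ≤ n. In the weighted DAG G'_A with K = (n+1)P, there exists a directed path from s = 0 to t = n+1 of total weight exactly K if and only if there exists a nonempty subset S ⊆ {1,…,n} with Σ_{j∈S} a_j = 0. (Correctness of the reduction from SUBSET SUM used to prove that the K Weighted Path problem with nonnegative weights is NP-complete on linear orders.) -/

import Mathlib

/-- Weight function of the DAG `G'_A` on vertices `0, 1, …, n+1` (a linear order):
`w i j = (j-i)·P + a j` for `0 ≤ i < j ≤ n`, `w i (n+1) = (n+1-i)·P` for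
`1 ≤ i ≤ n`, and `w 0 (n+1) = (n+1)·P + 1`. -/
def gaWeight' (n : ℕ) (a : ℕ → ℤ) (P : ℕ) (i j : ℕ) : ℤ :=
  if j ≤ n then ((j : ℤ) - (i : ℤ)) * (P : ℤ) + a j
  else if i = 0 then ((n : ℤ) + 1) * (P : ℤ) + 1
  else ((n : ℤ) + 1 - (i : ℤ)) * (P : ℤ)

/-- Correctness of the reduction from SUBSET SUM for the K Weighted Path problem:
`G'_A` has a directed path from `s = 0` to `t = n+1` of total weight exactly
`K = (n+1)·P` iff some nonempty `S ⊆ {1,…,n}` has `∑_{j ∈ S} a j = 0`. -/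
theorem kWeightedPath_iff_subsetSum (n : ℕ) (hn : 1 ≤ n) (a : ℕ → ℤ) (P : ℕ)
    (hP : ∀ j, 1 ≤ j → j ≤ n → 0 ≤ (P : ℤ) + a j) :
    (∃ (m : ℕ) (x : ℕ → ℕ), 1 ≤ m ∧ x 0 = 0 ∧ x m = n + 1 ∧
        (∀ r, r < m → x r < x (r + 1)) ∧
        ∑ r ∈ Finset.range m, gaWeight' n a P (x r) (x (r + 1)) =
          ((n : ℤ) + 1) * (P : ℤ)) ↔
      ∃ S : Finset ℕ, S.Nonempty ∧ S ⊆ Finset.Icc 1 n ∧ ∑ j ∈ S, a j = 0 := by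
  constructor
  · rintro ⟨m, x, hm, hx0, hxm, hmono, hsum⟩
    have hlt : ∀ r s : ℕ, r < s → s ≤ m → x r < x s := by
      intro r s hrs hsm
      induction s with
      | zero => omega
      | succ s ih =>
        rcases Nat.lt_or_ge r s with h | h
        · exact (ih h (by omega)).trans (hmono s (by omega))
        · have : r = s := by omega
          subst this
          exact hmono r (by omega)
    rcases Nat.lt_or_ge m 2 with hm2 | hm2
    · obtain rfl : m = 1 := by omega
      rw [Finset.sum_range_one, hx0, hxm] at hsum
      simp only [gaWeight', if_neg (by omega : ¬ n + 1 ≤ n), if_pos rfl] at hsum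
      push_cast at hsum
      linarith
    obtain ⟨m', rfl⟩ : ∃ m', m = m' + 1 := ⟨m - 1, by omega⟩
    have hm' : 1 ≤ m' := by omega
    have hxub : ∀ r, 1 ≤ r → r ≤ m' → 1 ≤ x r ∧ x r ≤ n := by
      intro r hr1 hr
      have h1 := hlt 0 r (by omega) (by omega)
      have h2 := hlt r (m' + 1) (by omega) le_rfl
      omega
    have hstep : ∀ r, r < m' → gaWeight' n a P (x r) (x (r + 1)) =
        ((x (r + 1) : ℤ) - (x r : ℤ)) * (P : ℤ) + a (x (r + 1)) := by
      intro r hr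
      have h := (hxub (r + 1) (by omega) (by omega)).2
      simp [gaWeight', h]
    have hlast : gaWeight' n a P (x m') (x (m' + 1)) =
        ((n : ℤ) + 1 - (x m' : ℤ)) * (P : ℤ) := by
      have h1 := (hxub m' hm' le_rfl).1
      rw [hxm]
      simp only [gaWeight', if_neg (by omega : ¬ n + 1 ≤ n), if_neg (by omega : ¬ x m' = 0)]
    rw [Finset.sum_range_succ,
      Finset.sum_congr rfl (fun r hr => hstep r (Finset.mem_range.1 hr)), hlast,
      Finset.sum_add_distrib, ← Finset.sum_mul,
      Finset.sum_range_sub (fun r => (x r : ℤ)), hx0] at hsum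
    have hT : ∑ r ∈ Finset.range m', a (x (r + 1)) = 0 := by
      push_cast at hsum
      linear_combination hsum
    refine ⟨(Finset.Ico 1 (m' + 1)).image x, ?_, ?_, ?_⟩
    · exact ⟨x 1, Finset.mem_image.2 ⟨1, by simp [Finset.mem_Ico]; omega, rfl⟩⟩
    · intro j hj
      obtain ⟨r, hr, rfl⟩ := Finset.mem_image.1 hj
      rw [Finset.mem_Ico] at hr
      have := hxub r hr.1 (by omega)
      exact Finset.mem_Icc.2 this
    · rw [Finset.sum_image (fun r hr r' hr' h => by
        rw [Finset.mem_coe, Finset.mem_Ico] at hr hr'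
        by_contra hne
        rcases Nat.lt_or_ge r r' with hc | hc
        · exact absurd h (Nat.ne_of_lt (hlt r r' hc (by omega)))
        · exact absurd h.symm (Nat.ne_of_lt (hlt r' r (by omega) (by omega))))]
      rw [Finset.sum_Ico_eq_sum_range]
      simp only [Nat.add_sub_cancel]
      rw [← hT]
      exact Finset.sum_congr rfl fun r _ => by rw [Nat.add_comm]
  · rintro ⟨S, hS, hsub, hsum⟩
    set k := S.card with hk
    have hk1 : 1 ≤ k := Finset.card_pos.2 hS
    set F : Fin k ↪o ℕ := S.orderEmbOfFin rfl with hF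
    set f : ℕ → ℕ := fun i => if h : i < k then F ⟨i, h⟩ else n + 1 with hf
    have hfmem : ∀ i, i < k → f i ∈ S := by
      intro i hi
      simp only [hf, dif_pos hi]
      exact S.orderEmbOfFin_mem rfl ⟨i, hi⟩
    have hfb : ∀ i, i < k → 1 ≤ f i ∧ f i ≤ n := by
      intro i hi
      exact Finset.mem_Icc.1 (hsub (hfmem i hi))
    have hfmono : ∀ i j, i < j → j < k → f i < f j := by
      intro i j hij hj
      simp only [hf, dif_pos hj, dif_pos (hij.trans hj)]
      exact F.strictMono (by exact Fin.mk_lt_mk.2 hij)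
    have hfo : f k = n + 1 := by simp [hf]
    set x : ℕ → ℕ := fun r => if r = 0 then 0 else f (r - 1) with hx
    have hx0 : x 0 = 0 := rfl
    have hxs : ∀ r, x (r + 1) = f r := fun r => rfl
    have hmono : ∀ r, r < k + 1 → x r < x (r + 1) := by
      intro r hr
      rcases Nat.eq_zero_or_pos r with rfl | hr0
      · rw [hx0, hxs]
        exact (hfb 0 hk1).1
      · obtain ⟨r', rfl⟩ : ∃ r', r = r' + 1 := ⟨r - 1, by omega⟩
        rw [hxs, hxs]
        rcases Nat.lt_or_ge (r' + 1) k with h | h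
        · exact hfmono r' (r' + 1) (by omega) h
        · have : r' + 1 = k := by omega
          rw [this, hfo]
          have := (hfb r' (by omega)).2
          omega
    have hxk : x (k + 1) = n + 1 := by rw [hxs, hfo]
    refine ⟨k + 1, x, by omega, hx0, hxk, hmono, ?_⟩
    have hxub : ∀ r, 1 ≤ r → r ≤ k → 1 ≤ x r ∧ x r ≤ n := by
      intro r hr1 hr
      obtain ⟨r', rfl⟩ : ∃ r', r = r' + 1 := ⟨r - 1, by omega⟩
      rw [hxs]
      exact hfb r' (by omega)
    have hstep : ∀ r, r < k → gaWeight' n a P (x r) (x (r + 1)) =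
        ((x (r + 1) : ℤ) - (x r : ℤ)) * (P : ℤ) + a (x (r + 1)) := by
      intro r hr
      have h := (hxub (r + 1) (by omega) (by omega)).2
      simp [gaWeight', h]
    have hlast : gaWeight' n a P (x k) (x (k + 1)) =
        ((n : ℤ) + 1 - (x k : ℤ)) * (P : ℤ) := by
      have h1 := (hxub k hk1 le_rfl).1
      rw [hxk]
      simp only [gaWeight', if_neg (by omega : ¬ n + 1 ≤ n), if_neg (by omega : ¬ x k = 0)]
    rw [Finset.sum_range_succ,
      Finset.sum_congr rfl (fun r hr => hstep r (Finset.mem_range.1 hr)), hlast,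
      Finset.sum_add_distrib, ← Finset.sum_mul,
      Finset.sum_range_sub (fun r => (x r : ℤ)), hx0]
    have himg : (Finset.range k).image f = S := by
      ext j
      simp only [Finset.mem_image, Finset.mem_range]
      constructor
      · rintro ⟨i, hi, rfl⟩
        exact hfmem i hi
      · intro hj
        have : j ∈ Set.range F := by
          rw [Finset.range_orderEmbOfFin]
          exact hj
        obtain ⟨i, hi⟩ := this
        exact ⟨i.1, i.2, by simp only [hf, dif_pos i.2, Fin.eta]; exact hi⟩
    have hT : ∑ r ∈ Finset.range k, a (x (r + 1)) = 0 := by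
      have hinj : ∀ r ∈ Finset.range k, ∀ r' ∈ Finset.range k, f r = f r' → r = r' := by
        intro r hr r' hr' h
        rw [Finset.mem_range] at hr hr'
        by_contra hne
        rcases Nat.lt_or_ge r r' with hc | hc
        · exact absurd h (Nat.ne_of_lt (hfmono r r' hc hr'))
        · exact absurd h.symm (Nat.ne_of_lt (hfmono r' r (by omega) hr))
      calc ∑ r ∈ Finset.range k, a (x (r + 1))
          = ∑ r ∈ Finset.range k, a (f r) := Finset.sum_congr rfl fun r _ => by rw [hxs]
        _ = ∑ j ∈ (Finset.range k).image f, a j := (Finset.sum_image hinj).symm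
        _ = 0 := by rw [himg]; exact hsum
    rw [hT]
    push_cast
    ring
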